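/- Let A ∈ ℝ^{m×n} with m ≥ 2 have all rows nonzero, and let r ∈ ℝ^m be a nonzero vector with r^{(j₀)} = 0 for some fixed index j₀. Suppose an index j satisfies |r^{(j)}|² ≥ (1/2)( max_{1≤i≤m} |r^{(i)}|² + Σ_{i=1}^m (‖A^{(i)}‖₂²/‖A‖_F²)|r^{(i)}|² ). Then |r^{(j)}|² ≥ (1/2) · (min_{i≠j₀} ‖A^{(i)}‖₂² / ‖A‖_F²) · ( ‖A‖_F²/(‖A‖_F² − min_{1≤i≤m} ‖A^{(i)}‖₂²) + 1 ) · ‖r‖₂². -/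

import Mathlib

open Matrix

/-- if the residual vanishes at some index `j₀` and index `j` satisfies the
GRMK greedy threshold, then
`|r⁽ʲ⁾|² ≥ (1/2) (min_{i≠j₀} ‖A⁽ⁱ⁾‖₂² / ‖A‖_F²) (‖A‖_F²/(‖A‖_F² − min_i ‖A⁽ⁱ⁾‖₂²) + 1) ‖r‖₂²`. -/
theorem grmk_threshold_lower_bound_later (m n : ℕ) (hm : 2 ≤ m)
    (A : Matrix (Fin m) (Fin n) ℝ)
    (hA : ∀ i, (fun j => A i j) ≠ 0)
    (r : Fin m → ℝ) (hr : r ≠ 0)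
    (j₀ : Fin m) (hj₀ : r j₀ = 0)
    (Mx : ℝ) (hMx : IsGreatest (Set.range fun i => (r i) ^ 2) Mx)
    (mnAll : ℝ) (hmnAll : IsLeast (Set.range fun i => ∑ l, (A i l) ^ 2) mnAll)
    (mnNe : ℝ) (hmnNe : IsLeast ((fun i => ∑ l, (A i l) ^ 2) '' {i | i ≠ j₀}) mnNe)
    (j : Fin m)
    (hj : (r j) ^ 2 ≥
      (1 / 2) * (Mx + ∑ i, ((∑ l, (A i l) ^ 2) / ∑ i', ∑ l, (A i' l) ^ 2) * (r i) ^ 2)) :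
    (r j) ^ 2 ≥
      (1 / 2) * (mnNe / ∑ i, ∑ l, (A i l) ^ 2) *
        ((∑ i, ∑ l, (A i l) ^ 2) / ((∑ i, ∑ l, (A i l) ^ 2) - mnAll) + 1) *
        ∑ i, (r i) ^ 2 := by
  haveI : NeZero m := ⟨by omega⟩
  set F := ∑ i, ∑ l, (A i l) ^ 2 with hFdef
  set R := ∑ i, (r i) ^ 2 with hRdef
  have hrow : ∀ i, 0 < ∑ l, (A i l) ^ 2 := by
    intro i
    have h := hA i
    have hex : ∃ l, A i l ≠ 0 := by
      by_contra h'
      push_neg at h'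
      exact h (funext h')
    obtain ⟨l, hl⟩ := hex
    exact Finset.sum_pos' (fun _ _ => sq_nonneg _)
      ⟨l, Finset.mem_univ _, by positivity⟩
  have hFpos : 0 < F := Finset.sum_pos (fun i _ => hrow i) Finset.univ_nonempty
  -- facts about mnNe
  obtain ⟨i₁, hi₁ne, hi₁⟩ := hmnNe.1
  have hmnNepos : 0 < mnNe := hi₁ ▸ hrow i₁
  have hmnNe_le : ∀ i, i ≠ j₀ → mnNe ≤ ∑ l, (A i l) ^ 2 := fun i hi => hmnNe.2 ⟨i, hi, rfl⟩
  have hmnAll_le : mnAll ≤ ∑ l, (A j₀ l) ^ 2 := hmnAll.2 ⟨j₀, rfl⟩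
  have hMxnn : 0 ≤ Mx := by
    obtain ⟨i, hi⟩ := hMx.1
    exact hi ▸ sq_nonneg _
  have hMx_ub : ∀ i, (r i) ^ 2 ≤ Mx := fun i => hMx.2 ⟨i, rfl⟩
  -- sum over erase j₀
  have hsum_erase : ∑ i ∈ Finset.univ.erase j₀, ∑ l, (A i l) ^ 2
      = F - ∑ l, (A j₀ l) ^ 2 :=
    Finset.sum_erase_eq_sub (Finset.mem_univ j₀)
  have hFsub_pos : 0 < F - mnAll := by
    have h1 : 0 < ∑ i ∈ Finset.univ.erase j₀, ∑ l, (A i l) ^ 2 := by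
      apply Finset.sum_pos (fun i _ => hrow i)
      exact ⟨i₁, Finset.mem_erase.2 ⟨hi₁ne, Finset.mem_univ _⟩⟩
    nlinarith [hsum_erase]
  -- key 1 : mnNe * R ≤ ∑ i, ‖A_i‖² r_i²
  have key1 : mnNe * R ≤ ∑ i, (∑ l, (A i l) ^ 2) * (r i) ^ 2 := by
    rw [hRdef, Finset.mul_sum]
    apply Finset.sum_le_sum
    intro i _
    by_cases h : i = j₀
    · subst h; simp [hj₀]
    · exact mul_le_mul_of_nonneg_right (hmnNe_le i h) (sq_nonneg _)
  -- key 2 : ∑ i, ‖A_i‖² r_i² ≤ (F - mnAll) * Mx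
  have key2 : ∑ i, (∑ l, (A i l) ^ 2) * (r i) ^ 2 ≤ (F - mnAll) * Mx := by
    have e1 : ∑ i, (∑ l, (A i l) ^ 2) * (r i) ^ 2
        = ∑ i ∈ Finset.univ.erase j₀, (∑ l, (A i l) ^ 2) * (r i) ^ 2 :=
      (Finset.sum_erase Finset.univ (by simp [hj₀])).symm
    have e2 : ∑ i ∈ Finset.univ.erase j₀, (∑ l, (A i l) ^ 2) * (r i) ^ 2
        ≤ ∑ i ∈ Finset.univ.erase j₀, (∑ l, (A i l) ^ 2) * Mx := by
      apply Finset.sum_le_sum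
      intro i _
      exact mul_le_mul_of_nonneg_left (hMx_ub i) (hrow i).le
    have e3 : ∑ i ∈ Finset.univ.erase j₀, (∑ l, (A i l) ^ 2) * Mx
        = (F - ∑ l, (A j₀ l) ^ 2) * Mx := by
      rw [← Finset.sum_mul, hsum_erase]
    have e4 : (F - ∑ l, (A j₀ l) ^ 2) * Mx ≤ (F - mnAll) * Mx := by
      apply mul_le_mul_of_nonneg_right _ hMxnn
      linarith
    linarith [e1 ▸ (le_trans e2 (e3 ▸ e4))]
  -- bounds on Mx and on the weighted sum
  have hMx_lb : mnNe * R / (F - mnAll) ≤ Mx := by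
    rw [div_le_iff₀ hFsub_pos]
    nlinarith
  have hS_lb : mnNe / F * R ≤ ∑ i, ((∑ l, (A i l) ^ 2) / F) * (r i) ^ 2 := by
    have : ∑ i, ((∑ l, (A i l) ^ 2) / F) * (r i) ^ 2
        = (∑ i, (∑ l, (A i l) ^ 2) * (r i) ^ 2) / F := by
      rw [Finset.sum_div]
      congr 1; funext i; ring
    rw [this, div_mul_eq_mul_div]
    gcongr
  have hRnn : 0 ≤ R := Finset.sum_nonneg fun i _ => sq_nonneg _
  have heq : (1 / 2) * (mnNe / F) * (F / (F - mnAll) + 1) * R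
      = (1 / 2) * (mnNe * R / (F - mnAll) + mnNe / F * R) := by
    field_simp
  rw [ge_iff_le, heq]
  calc (1 / 2) * (mnNe * R / (F - mnAll) + mnNe / F * R)
      ≤ (1 / 2) * (Mx + ∑ i, ((∑ l, (A i l) ^ 2) / F) * (r i) ^ 2) := by
        apply mul_le_mul_of_nonneg_left _ (by norm_num)
        exact add_le_add hMx_lb hS_lb
    _ ≤ (r j) ^ 2 := hj
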